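/- Let Γ be a countably infinite group with a finite symmetric generating set S and Cayley graph 𝒢, and let H be a subgroup of Γ. Suppose that every sequence (φ_n) of normalized positive definite functions φ_n : Γ → [0,1] converging pointwise to 1 converges to 1 uniformly on H (a characterization of relative property (T) for the pair (Γ,H)). Then there exists a threshold α* < 1 such that for every Γ-invariant bond percolation P on 𝒢 with E[deg_ω(o)] > α*·deg(o), one has inf_{h ∈ H} τ(g, gh) > 0 for every g ∈ Γ. -/

import Mathlib

open MeasureTheory Filter
open scoped ComplexOrder symmDiff

namespace InvPerc

variable {Γ : Type*} [Group Γ]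

/-- Percolation configurations: indicator functions on unordered pairs of vertices. -/
abbrev Config (Γ : Type*) := Sym2 Γ → Bool

/-- The edge set of the (right) Cayley graph of `Γ` with respect to `S`. -/
def IsCayleyEdge (S : Finset Γ) (e : Sym2 Γ) : Prop :=
  ∃ g : Γ, ∃ t ∈ S, e = s(g, g * t)

/-- The action of `Γ` on configurations induced by left multiplication:
`e ∈ shift γ ω ↔ γ⁻¹ • e ∈ ω`. -/
def shift (γ : Γ) (ω : Config Γ) : Config Γ :=
  fun e => ω (Sym2.map (fun x => γ⁻¹ * x) e)

/-- `ConnBy ω u v n` : `u` and `v` are joined by a path of at most `n` open edges of `ω`. -/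
def ConnBy (ω : Config Γ) (u v : Γ) (n : ℕ) : Prop :=
  ∃ l : List Γ, l.length ≤ n ∧ List.Chain (fun a b => ω s(a, b) = true) u l ∧
    (u :: l).getLast (List.cons_ne_nil u l) = v

/-- `u` and `v` lie in the same cluster of the configuration `ω` (`u ↔ v` in `ω`). -/
def Conn (ω : Config Γ) (u v : Γ) : Prop := ∃ n : ℕ, ConnBy ω u v n

/-- The two-point function `τ(u,v) = P[u ↔ v]`. -/
noncomputable def tpf (P : Measure (Config Γ)) (u v : Γ) : ℝ :=
  (P {ω | Conn ω u v}).toReal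

/-- A `Γ`-invariant bond percolation on the Cayley graph of `(Γ, S)`: a probability
measure on configurations, supported on subsets of the Cayley edge set, invariant under
the action induced by left multiplication. -/
structure IsInvBondPerc (S : Finset Γ) (P : Measure (Config Γ)) : Prop where
  prob : IsProbabilityMeasure P
  supported : P {ω | ∀ e : Sym2 Γ, ω e = true → IsCayleyEdge S e} = 1
  invariant : ∀ γ : Γ, P.map (shift γ) = P

/-- The expected degree of the origin, `E[deg_ω(o)] = ∑_{t ∈ S} P[{o, t} ∈ ω]`. -/
noncomputable def expDeg (S : Finset Γ) (P : Measure (Config Γ)) : ℝ :=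
  ∑ t ∈ S, (P {ω : Config Γ | ω s(1, t) = true}).toReal

/-- The word length of `g` with respect to the generating set `S`. -/
noncomputable def wlen (S : Finset Γ) (g : Γ) : ℕ :=
  sInf {n : ℕ | ∃ l : List Γ, (∀ x ∈ l, x ∈ S) ∧ l.prod = g ∧ l.length = n}

/-- The word metric `d(g,h) = |g⁻¹h|`. -/
noncomputable def wdist (S : Finset Γ) (g h : Γ) : ℕ := wlen S (g⁻¹ * h)

/-- The two-point function of `P` vanishes at infinity:
`sup {τ(g,h) : d(g,h) > r} → 0` as `r → ∞`. -/
def TpfVanishes (S : Finset Γ) (P : Measure (Config Γ)) : Prop :=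
  ∀ ε : ℝ, 0 < ε → ∃ r : ℕ, ∀ g h : Γ, r < wdist S g h → tpf P g h < ε

/-- `S` is a finite symmetric generating set not containing the identity. -/
def IsSymmGen (S : Finset Γ) : Prop :=
  (1 : Γ) ∉ S ∧ (∀ t ∈ S, t⁻¹ ∈ S) ∧
    ∀ g : Γ, ∃ l : List Γ, (∀ x ∈ l, x ∈ S) ∧ l.prod = g

/-- A positive definite function on `Γ`. -/
def IsPosDef (φ : Γ → ℂ) : Prop :=
  ∀ (n : ℕ) (g : Fin n → Γ) (a : Fin n → ℂ),
    0 ≤ ∑ i : Fin n, ∑ j : Fin n, (starRingEnd ℂ) (a i) * a j * φ ((g i)⁻¹ * g j)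

/-- A conditionally negative definite function on `Γ`. -/
def IsCondNegDef (ψ : Γ → ℝ) : Prop :=
  ψ 1 = 0 ∧ (∀ g : Γ, ψ g⁻¹ = ψ g) ∧
    ∀ (n : ℕ) (g : Fin n → Γ) (a : Fin n → ℝ), (∑ i : Fin n, a i) = 0 →
      ∑ i : Fin n, ∑ j : Fin n, a i * a j * ψ ((g i)⁻¹ * g j) ≤ 0

end InvPerc

set_option linter.unusedSectionVars false
set_option linter.unusedVariables false

namespace InvPerc
variable {Γ : Type*} [Group Γ]

/-- Conn as ReflTransGen. -/
lemma conn_iff (ω : Config Γ) (u v : Γ) :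
    Conn ω u v ↔ Relation.ReflTransGen (fun a b => ω s(a, b) = true) u v := by
  constructor
  · rintro ⟨n, l, -, hc, hl⟩
    clear n
    induction l generalizing u with
    | nil => simp at hl; exact hl ▸ Relation.ReflTransGen.refl
    | cons b l ih =>
      simp only [List.Chain, List.chain_cons] at hc
      have hl' : (b :: l).getLast (List.cons_ne_nil b l) = v := by
        rwa [List.getLast_cons] at hl
      exact (Relation.ReflTransGen.single (r := fun a b => ω s(a, b) = true) hc.1).trans (ih b hc.2 hl')
  · intro h
    induction h using Relation.ReflTransGen.head_induction_on with
    | refl => exact ⟨0, [], by simp [List.Chain]⟩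
    | head hab _ ih =>
      obtain ⟨n, l, hn, hc, hl⟩ := ih
      refine ⟨n + 1, _ :: l, by simpa using Nat.add_le_add_right hn 1,
        List.chain_cons.2 ⟨hab, hc⟩, ?_⟩
      rw [List.getLast_cons]
      exact hl

lemma conn_refl (ω : Config Γ) (u : Γ) : Conn ω u u :=
  (conn_iff ω u u).2 Relation.ReflTransGen.refl

lemma conn_symm {ω : Config Γ} {u v : Γ} (h : Conn ω u v) : Conn ω v u := by
  rw [conn_iff] at h ⊢
  refine @Std.Symm.symm _ _ (@Relation.ReflTransGen.stdSymm _ _ ⟨fun a b hab => ?_⟩) _ _ h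
  rwa [Sym2.eq_swap]

lemma conn_trans {ω : Config Γ} {u v w : Γ} (h1 : Conn ω u v) (h2 : Conn ω v w) :
    Conn ω u w := by
  rw [conn_iff] at h1 h2 ⊢
  exact h1.trans h2

lemma conn_of_edge {ω : Config Γ} {u v : Γ} (h : ω s(u, v) = true) : Conn ω u v :=
  (conn_iff ω u v).2 (Relation.ReflTransGen.single h)

lemma measurable_coord (e : Sym2 Γ) : Measurable (fun ω : Config Γ => ω e) :=
  measurable_pi_apply e

lemma measurableSet_edge (e : Sym2 Γ) : MeasurableSet {ω : Config Γ | ω e = true} :=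
  (measurable_coord e) (measurableSet_singleton true)

lemma measurableSet_chain (u : Γ) (l : List Γ) :
    MeasurableSet {ω : Config Γ | List.Chain (fun a b => ω s(a, b) = true) u l} := by
  induction l generalizing u with
  | nil => simp [List.Chain]
  | cons b l ih =>
    have : {ω : Config Γ | List.Chain (fun a b => ω s(a, b) = true) u (b :: l)}
        = {ω : Config Γ | ω s(u, b) = true} ∩
          {ω : Config Γ | List.Chain (fun a b => ω s(a, b) = true) b l} := by
      ext ω; simp [List.Chain, List.chain_cons]
    rw [this]
    exact (measurableSet_edge _).inter (ih b)

lemma measurableSet_conn [Countable Γ] (u v : Γ) :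
    MeasurableSet {ω : Config Γ | Conn ω u v} := by
  have : {ω : Config Γ | Conn ω u v} =
      ⋃ l : {l : List Γ // (u :: l).getLast (List.cons_ne_nil u l) = v},
        {ω : Config Γ | List.Chain (fun a b => ω s(a, b) = true) u l.1} := by
    ext ω
    simp only [Set.mem_setOf_eq, Set.mem_iUnion]
    constructor
    · rintro ⟨n, l, -, hc, hl⟩; exact ⟨⟨l, hl⟩, hc⟩
    · rintro ⟨⟨l, hl⟩, hc⟩; exact ⟨l.length, l, le_rfl, hc, hl⟩
  rw [this]
  exact MeasurableSet.iUnion fun l => measurableSet_chain u l.1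

lemma measurable_shift (γ : Γ) : Measurable (shift γ : Config Γ → Config Γ) :=
  measurable_pi_lambda _ fun e => measurable_pi_apply _

lemma shift_edge (γ : Γ) (ω : Config Γ) (a b : Γ) :
    shift γ ω s(a, b) = ω s(γ⁻¹ * a, γ⁻¹ * b) := by
  simp [shift, Sym2.map_pair_eq]

lemma conn_shift (γ : Γ) (ω : Config Γ) (u v : Γ) :
    Conn (shift γ ω) u v ↔ Conn ω (γ⁻¹ * u) (γ⁻¹ * v) := by
  simp only [conn_iff]
  constructor
  · intro h
    induction h with
    | refl => exact Relation.ReflTransGen.refl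
    | tail _ hbc ih =>
      rw [shift_edge] at hbc
      exact ih.tail hbc
  · intro h
    have : ∀ x y : Γ, Relation.ReflTransGen (fun a b => ω s(a, b) = true) x y →
        Relation.ReflTransGen (fun a b => shift γ ω s(a, b) = true) (γ * x) (γ * y) := by
      intro x y hxy
      induction hxy with
      | refl => exact Relation.ReflTransGen.refl
      | tail _ hbc ih =>
        refine ih.tail ?_
        rw [shift_edge]
        simpa using hbc
    have h2 := this _ _ h
    simpa using h2

section Perc
variable [Countable Γ] {S : Finset Γ} {P : Measure (Config Γ)}

lemma tpf_inv (hP : IsInvBondPerc S P) (γ u v : Γ) :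
    tpf P (γ * u) (γ * v) = tpf P u v := by
  unfold tpf
  have hm := measurable_shift (Γ := Γ) γ
  have := hP.invariant γ
  conv_lhs => rw [← this]
  rw [Measure.map_apply hm (measurableSet_conn _ _)]
  have : shift γ ⁻¹' {ω : Config Γ | Conn ω (γ * u) (γ * v)}
      = {ω : Config Γ | Conn ω u v} := by
    ext ω
    simp [Set.mem_preimage, conn_shift]
  rw [this]

lemma tpf_one (hP : IsInvBondPerc S P) (g h : Γ) : tpf P g (g * h) = tpf P 1 h := by
  have := tpf_inv hP g 1 h
  simpa using this

lemma tpf_nonneg (u v : Γ) : 0 ≤ tpf P u v := ENNReal.toReal_nonneg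

lemma tpf_le_one (hP : IsInvBondPerc S P) (u v : Γ) : tpf P u v ≤ 1 := by
  have := hP.prob
  exact ENNReal.toReal_le_of_le_ofReal zero_le_one (by simpa using prob_le_one)

lemma tpf_self (hP : IsInvBondPerc S P) (u : Γ) : tpf P u u = 1 := by
  have := hP.prob
  have : {ω : Config Γ | Conn ω u u} = Set.univ := by
    ext ω; simp [conn_refl]
  rw [tpf, this, measure_univ, ENNReal.toReal_one]

/-- marginal invariance : P[edge (g, g t) open] = P[edge (1,t) open]. -/
lemma marginal_inv (hP : IsInvBondPerc S P) (g t : Γ) :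
    P {ω : Config Γ | ω s(g, g * t) = true} = P {ω : Config Γ | ω s(1, t) = true} := by
  conv_rhs => rw [← hP.invariant g⁻¹]
  rw [Measure.map_apply (measurable_shift _) (measurableSet_edge _)]
  have : shift g⁻¹ ⁻¹' {ω : Config Γ | ω s(1, t) = true}
      = {ω : Config Γ | ω s(g, g * t) = true} := by
    ext ω
    simp [Set.mem_preimage, shift_edge]
  rw [this]

end Perc

lemma posdef_kernel {n : ℕ} (r : Fin n → Fin n → Prop) [inst : DecidableRel r] (hr : Equivalence r) (a : Fin n → ℂ) :
    (0:ℂ) ≤ ∑ i : Fin n, ∑ j : Fin n,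
      (starRingEnd ℂ) (a i) * a j * (if r i j then 1 else 0) := by
  letI s : Setoid (Fin n) := ⟨r, hr⟩
  letI : DecidableRel ((· ≈ ·) : Fin n → Fin n → Prop) := fun x y => inst x y
  set f : Fin n → Quotient s := fun i => Quotient.mk s i with hf
  set T : Quotient s → ℂ := fun q => ∑ j : Fin n, a j * (if f j = q then 1 else 0) with hT
  have heq : ∑ q : Quotient s, (starRingEnd ℂ) (T q) * T q
      = ∑ i : Fin n, ∑ j : Fin n,
        (starRingEnd ℂ) (a i) * a j * (if r i j then 1 else 0) := by
    have h1 : ∀ q, (starRingEnd ℂ) (T q) * T q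
        = ∑ i : Fin n, ∑ j : Fin n,
          ((starRingEnd ℂ) (a i) * (if f i = q then 1 else 0)) *
            (a j * (if f j = q then 1 else 0)) := by
      intro q
      rw [hT, map_sum, Finset.sum_mul_sum]
      simp [map_mul, apply_ite]
    rw [Finset.sum_congr rfl fun q _ => h1 q]
    rw [Finset.sum_comm]
    refine Finset.sum_congr rfl fun i _ => ?_
    rw [Finset.sum_comm]
    refine Finset.sum_congr rfl fun j _ => ?_
    have : ∀ q : Quotient s, ((starRingEnd ℂ) (a i) * (if f i = q then 1 else 0)) *
        (a j * (if f j = q then 1 else 0))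
        = if f i = q then (if f j = q then (starRingEnd ℂ) (a i) * a j else 0) else 0 := by
      intro q
      split_ifs <;> ring
    rw [Finset.sum_congr rfl fun q _ => this q, Finset.sum_ite_eq]
    have hrij : r i j ↔ f i = f j := by
      rw [hf]
      exact (Quotient.eq (r := s)).symm
    by_cases h : r i j
    · have : f i = f j := hrij.1 h
      simp [h, this, Finset.mem_univ]
    · have : ¬ f j = f i := fun hh => h (hrij.2 hh.symm)
      simp [h, this, Finset.mem_univ]
  rw [← heq]
  refine Finset.sum_nonneg fun q _ => ?_
  rw [mul_comm, Complex.mul_conj]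
  exact_mod_cast Complex.normSq_nonneg (T q)

lemma conn_equivalence (ω : Config Γ) {n : ℕ} (g : Fin n → Γ) :
    Equivalence (fun i j => Conn ω (g i) (g j)) :=
  ⟨fun i => conn_refl ω (g i), fun h => conn_symm h, fun h1 h2 => conn_trans h1 h2⟩

lemma isPosDef_tpf [Countable Γ] {S : Finset Γ} {P : Measure (Config Γ)}
    (hP : IsInvBondPerc S P) : IsPosDef (fun g : Γ => ((tpf P 1 g : ℝ) : ℂ)) := by
  classical
  have hprob := hP.prob
  intro n g a
  -- replace φ((g i)⁻¹ g j) with tpf P (g i) (g j)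
  have hrepl : ∀ i j : Fin n, ((tpf P 1 ((g i)⁻¹ * g j) : ℝ) : ℂ)
      = ((tpf P (g i) (g j) : ℝ) : ℂ) := by
    intro i j
    rw [← tpf_one hP (g i) ((g i)⁻¹ * g j), mul_inv_cancel_left]
  simp only [hrepl]
  -- express as an integral
  have hint : ∀ i j : Fin n, Integrable
      (fun ω : Config Γ => (if Conn ω (g i) (g j) then (1:ℂ) else 0)) P := by
    intro i j
    have : (fun ω : Config Γ => (if Conn ω (g i) (g j) then (1:ℂ) else 0))
        = Set.indicator {ω : Config Γ | Conn ω (g i) (g j)} (fun _ => (1:ℂ)) := by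
      ext ω
      simp [Set.indicator_apply]
    rw [this]
    exact (integrable_const (1:ℂ)).indicator (measurableSet_conn _ _)
  have hval : ∀ i j : Fin n, ((tpf P (g i) (g j) : ℝ) : ℂ)
      = ∫ ω, (if Conn ω (g i) (g j) then (1:ℂ) else 0) ∂P := by
    intro i j
    have : (fun ω : Config Γ => (if Conn ω (g i) (g j) then (1:ℂ) else 0))
        = Set.indicator {ω : Config Γ | Conn ω (g i) (g j)} (fun _ => (1:ℂ)) := by
      ext ω
      simp [Set.indicator_apply]
    rw [this, integral_indicator_const (1:ℂ) (measurableSet_conn _ _)]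
    simp [tpf, Measure.real]
  have hrw : ∑ i : Fin n, ∑ j : Fin n,
      (starRingEnd ℂ) (a i) * a j * ((tpf P (g i) (g j) : ℝ) : ℂ)
      = ∫ ω, (∑ i : Fin n, ∑ j : Fin n, (starRingEnd ℂ) (a i) * a j *
          (if Conn ω (g i) (g j) then (1:ℂ) else 0)) ∂P := by
    rw [integral_finset_sum _ (fun i _ => integrable_finset_sum _
      (fun j _ => ((hint i j).const_mul _)))]
    refine Finset.sum_congr rfl fun i _ => ?_
    rw [integral_finset_sum _ (fun j _ => ((hint i j).const_mul _))]
    refine Finset.sum_congr rfl fun j _ => ?_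
    rw [hval i j, ← integral_const_mul]
  rw [hrw]
  -- pointwise nonnegativity, then integrate
  have hptwise : ∀ ω : Config Γ, (0:ℂ) ≤ ∑ i : Fin n, ∑ j : Fin n,
      (starRingEnd ℂ) (a i) * a j * (if Conn ω (g i) (g j) then (1:ℂ) else 0) :=
    fun ω => posdef_kernel _ (conn_equivalence ω g) a
  set F : Config Γ → ℂ := fun ω => ∑ i : Fin n, ∑ j : Fin n,
    (starRingEnd ℂ) (a i) * a j * (if Conn ω (g i) (g j) then (1:ℂ) else 0) with hF
  have hFint : Integrable F P :=
    integrable_finset_sum _ (fun i _ => integrable_finset_sum _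
      (fun j _ => ((hint i j).const_mul _)))
  have hre := Complex.reCLM.integral_comp_comm hFint
  have him := Complex.imCLM.integral_comp_comm hFint
  simp only [Complex.reCLM_apply] at hre
  simp only [Complex.imCLM_apply] at him
  rw [Complex.le_def]
  constructor
  · rw [Complex.zero_re, ← hre]
    refine integral_nonneg fun ω => ?_
    exact (Complex.le_def.1 (hptwise ω)).1
  · rw [Complex.zero_im, ← him]
    have h0 : ∀ ω, (F ω).im = 0 := fun ω => ((Complex.le_def.1 (hptwise ω)).2).symm
    simp [h0]

section Bound
variable [Countable Γ] {S : Finset Γ} {P : Measure (Config Γ)}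

lemma prob_compl_toReal (hP : IsInvBondPerc S P) {A : Set (Config Γ)} (hA : MeasurableSet A) :
    (P Aᶜ).toReal = 1 - (P A).toReal := by
  have := hP.prob
  rw [prob_compl_eq_one_sub hA, ENNReal.toReal_sub_of_le prob_le_one ENNReal.one_ne_top,
    ENNReal.toReal_one]

lemma conn_compl_le (hP : IsInvBondPerc S P) {δ : ℝ}
    (hmarg : ∀ t ∈ S, (P {ω : Config Γ | ω s(1, t) = true}ᶜ).toReal ≤ δ) :
    ∀ (l : List Γ), (∀ x ∈ l, x ∈ S) → ∀ u : Γ,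
      (P {ω : Config Γ | Conn ω u (u * l.prod)}ᶜ).toReal ≤ l.length * δ := by
  have hprob := hP.prob
  intro l
  induction l with
  | nil =>
    intro _ u
    have h1 : {ω : Config Γ | Conn ω u (u * ([] : List Γ).prod)}ᶜ = ∅ := by
      ext ω
      simp [conn_refl]
    rw [h1]
    simp
  | cons t l ih =>
    intro hmem u
    have ht : t ∈ S := hmem t List.mem_cons_self
    have hsub : {ω : Config Γ | Conn ω u (u * (t :: l).prod)}ᶜ ⊆
        {ω : Config Γ | ω s(u, u * t) = true}ᶜ ∪
        {ω : Config Γ | Conn ω (u * t) ((u * t) * l.prod)}ᶜ := by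
      intro ω hω
      by_contra hc
      simp only [Set.mem_union, Set.mem_compl_iff, Set.mem_setOf_eq, not_or, not_not] at hc
      apply hω
      have hconn : Conn ω u ((u * t) * l.prod) :=
        conn_trans (conn_of_edge hc.1) hc.2
      simp only [Set.mem_setOf_eq, List.prod_cons, ← mul_assoc]
      exact hconn
    have hb1 : (P {ω : Config Γ | ω s(u, u * t) = true}ᶜ).toReal ≤ δ := by
      rw [prob_compl_toReal hP (measurableSet_edge _), marginal_inv hP u t,
        ← prob_compl_toReal hP (measurableSet_edge _)]
      exact hmarg t ht
    have hb2 := ih (fun x hx => hmem x (List.mem_cons_of_mem t hx)) (u * t)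
    have hle : P {ω : Config Γ | Conn ω u (u * (t :: l).prod)}ᶜ ≤
        P ({ω : Config Γ | ω s(u, u * t) = true}ᶜ) +
        P ({ω : Config Γ | Conn ω (u * t) ((u * t) * l.prod)}ᶜ) :=
      le_trans (measure_mono hsub) (measure_union_le _ _)
    have hfin1 : P ({ω : Config Γ | ω s(u, u * t) = true}ᶜ) ≠ ⊤ := measure_ne_top _ _
    have hfin2 : P ({ω : Config Γ | Conn ω (u * t) ((u * t) * l.prod)}ᶜ) ≠ ⊤ :=
      measure_ne_top _ _
    have := ENNReal.toReal_mono (by simp [ENNReal.add_ne_top, hfin1, hfin2]) hle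
    rw [ENNReal.toReal_add hfin1 hfin2] at this
    calc (P {ω : Config Γ | Conn ω u (u * (t :: l).prod)}ᶜ).toReal
        ≤ _ + _ := this
      _ ≤ δ + l.length * δ := add_le_add hb1 hb2
      _ = (t :: l).length * δ := by
          simp [List.length_cons]
          ring

lemma one_sub_le_tpf (hP : IsInvBondPerc S P) {δ : ℝ}
    (hmarg : ∀ t ∈ S, (P {ω : Config Γ | ω s(1, t) = true}ᶜ).toReal ≤ δ)
    (l : List Γ) (hl : ∀ x ∈ l, x ∈ S) :
    1 - l.length * δ ≤ tpf P 1 l.prod := by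
  have h := conn_compl_le hP hmarg l hl 1
  rw [prob_compl_toReal hP (measurableSet_conn _ _)] at h
  have : tpf P 1 (1 * l.prod) = tpf P 1 l.prod := by rw [one_mul]
  rw [← this]
  unfold tpf
  linarith

lemma closed_marginal_le (hP : IsInvBondPerc S P) {α : ℝ}
    (hdeg : expDeg S P > α * (S.card : ℝ)) {t : Γ} (ht : t ∈ S) :
    (P {ω : Config Γ | ω s(1, t) = true}ᶜ).toReal ≤ (1 - α) * (S.card : ℝ) := by
  classical
  have hprob := hP.prob
  rw [prob_compl_toReal hP (measurableSet_edge _)]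
  have hrest : ∑ t' ∈ S.erase t, (P {ω : Config Γ | ω s(1, t') = true}).toReal
      ≤ ((S.erase t).card : ℝ) := by
    refine le_trans (Finset.sum_le_card_nsmul _ _ 1 fun x _ => ?_) (by simp)
    exact ENNReal.toReal_le_of_le_ofReal zero_le_one (by simpa using prob_le_one)
  have hsplit : ∑ t' ∈ S.erase t, (P {ω : Config Γ | ω s(1, t') = true}).toReal
      + (P {ω : Config Γ | ω s(1, t) = true}).toReal = expDeg S P :=
    Finset.sum_erase_add S _ ht
  have hcard : ((S.erase t).card : ℝ) = (S.card : ℝ) - 1 := by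
    rw [Finset.card_erase_of_mem ht]
    have h1 : 1 ≤ S.card := Finset.card_pos.2 ⟨t, ht⟩
    have : ((S.card - 1 : ℕ) : ℝ) = (S.card : ℝ) - 1 := by
      push_cast [h1]
      ring
    exact this
  rw [hcard] at hrest
  linarith

end Bound

end InvPerc

namespace InvPerc

/-- if every sequence of normalized positive definite functions
`φₙ : Γ → [0,1]` converging pointwise to `1` converges to `1` uniformly on the subgroup `H`
(relative property (T) for `(Γ,H)`), then there is a threshold `α* < 1` such that every
`Γ`-invariant bond percolation with `E[deg_ω(o)] > α*·deg(o)` has two-point function bounded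
away from zero on every left `H`-coset. -/
theorem relativeT_implies_coset_threshold {Γ : Type*} [Group Γ] [Countable Γ] [Infinite Γ]
    (S : Finset Γ) (hS : IsSymmGen S) (H : Subgroup Γ)
    (hrelT : ∀ φ : ℕ → Γ → ℝ,
      (∀ n : ℕ, (∀ g : Γ, 0 ≤ φ n g ∧ φ n g ≤ 1) ∧ φ n 1 = 1 ∧
        IsPosDef (fun g => (φ n g : ℂ))) →
      (∀ g : Γ, Tendsto (fun n => φ n g) atTop (nhds 1)) →
      ∀ ε : ℝ, 0 < ε → ∃ N : ℕ, ∀ n : ℕ, N ≤ n → ∀ h ∈ H, |1 - φ n h| < ε) :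
    ∃ αstar : ℝ, αstar < 1 ∧
      ∀ P : Measure (Config Γ), IsInvBondPerc S P →
        expDeg S P > αstar * (S.card : ℝ) →
        ∀ g : Γ, ∃ c : ℝ, 0 < c ∧ ∀ h ∈ H, c ≤ tpf P g (g * h) := by
  by_contra hcon
  push_neg at hcon
  have hall : ∀ n : ℕ, ∃ P : Measure (Config Γ), IsInvBondPerc S P ∧
      expDeg S P > (1 - 1 / (n + 1 : ℝ)) * (S.card : ℝ) ∧
      ∃ g : Γ, ∀ c : ℝ, 0 < c → ∃ h ∈ H, tpf P g (g * h) < c := by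
    intro n
    have hlt1 : (1 - 1 / (n + 1 : ℝ)) < 1 := by
      have : (0 : ℝ) < 1 / (n + 1 : ℝ) := by positivity
      linarith
    obtain ⟨P, h1, h2, g, h3⟩ := hcon _ hlt1
    exact ⟨P, h1, h2, g, fun c hc => by
      obtain ⟨h, hH, hh⟩ := h3 c hc
      exact ⟨h, hH, hh⟩⟩
  choose Pn hBP hdeg hfail using hall
  choose gn hfail using hfail
  set φ : ℕ → Γ → ℝ := fun n g => tpf (Pn n) 1 g with hφ
  have hmarg : ∀ n : ℕ, ∀ t ∈ S, ((Pn n) {ω : Config Γ | ω s(1, t) = true}ᶜ).toReal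
      ≤ (1 / (n + 1 : ℝ)) * (S.card : ℝ) := by
    intro n t ht
    have h1 := closed_marginal_le (hBP n) (hdeg n) ht
    have h2 : (1 - (1 - 1 / (n + 1 : ℝ))) = 1 / (n + 1 : ℝ) := by ring
    rwa [h2] at h1
  have hprop1 : ∀ n : ℕ, (∀ g : Γ, 0 ≤ φ n g ∧ φ n g ≤ 1) ∧ φ n 1 = 1 ∧
      IsPosDef (fun g => ((φ n g : ℝ) : ℂ)) := fun n =>
    ⟨fun g => ⟨tpf_nonneg _ _, tpf_le_one (hBP n) _ _⟩, tpf_self (hBP n) 1,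
      isPosDef_tpf (hBP n)⟩
  have hptwise : ∀ g : Γ, Tendsto (fun n => φ n g) atTop (nhds 1) := by
    intro g
    obtain ⟨l, hl, hprod⟩ := hS.2.2 g
    have hlow : ∀ n : ℕ, 1 - (l.length : ℝ) * ((1 / (n + 1 : ℝ)) * (S.card : ℝ)) ≤ φ n g := by
      intro n
      have := one_sub_le_tpf (hBP n) (hmarg n) l hl
      rwa [hprod] at this
    have hup : ∀ n : ℕ, φ n g ≤ 1 := fun n => tpf_le_one (hBP n) _ _
    have hlim : Tendsto (fun n : ℕ =>
        1 - (l.length : ℝ) * ((1 / (n + 1 : ℝ)) * (S.card : ℝ))) atTop (nhds 1) := by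
      have h0 : Tendsto (fun n : ℕ => (1 / (n + 1 : ℝ))) atTop (nhds 0) :=
        tendsto_one_div_add_atTop_nhds_zero_nat
      have h1 : Tendsto (fun n : ℕ =>
          ((l.length : ℝ) * (S.card : ℝ)) * (1 / (n + 1 : ℝ))) atTop (nhds 0) := by
        have := h0.const_mul ((l.length : ℝ) * (S.card : ℝ))
        simpa using this
      have h2 := (tendsto_const_nhds (α := ℕ) (f := atTop) (x := (1:ℝ))).sub h1
      simp only [sub_zero] at h2
      refine h2.congr fun n => ?_
      ring
    exact tendsto_of_tendsto_of_tendsto_of_le_of_le hlim tendsto_const_nhds hlow hup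
  obtain ⟨N, hN⟩ := hrelT φ hprop1 hptwise (1/2) (by norm_num)
  obtain ⟨h, hH, hlt⟩ := hfail N (1/2) (by norm_num)
  have h2 : tpf (Pn N) (gn N) (gn N * h) = φ N h := tpf_one (hBP N) (gn N) h
  rw [h2] at hlt
  have h1 := abs_lt.1 (hN N le_rfl h hH)
  linarith


end InvPerc
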